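/- Let h : ℝ → ℂ be measurable, suppose there exist C > 0 and c > 0 with ‖h(t)‖ ≤ C e^{-ct} for all t ≥ 1, and suppose there exist complex numbers a, b and constants ε > 0, C' > 0, such that ‖h(t) - (a + b log t)‖ ≤ C' t^{ε} for all t ∈ (0,1]. Define ζ(z) = (1/Γ(z)) ∫_0^∞ t^{z-1} h(t) dt for Re z > 0, where Γ is the Gamma function. Then z ζ(z) → -b as z → 0 within the half-plane {Re z > 0}. -/
import Mathlib


open MeasureTheory Set

private lemma locIntOn_of_bound (f : ℝ → ℂ) (hf : Measurable f) (M : ℝ)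
    (hb : ∀ t : ℝ, t ∈ Set.Ioi (0:ℝ) → ‖f t‖ ≤ M) :
    MeasureTheory.LocallyIntegrableOn f (Set.Ioi 0) := by
  intro x _
  refine ⟨Set.Ioi 0 ∩ Metric.ball x 1,
    inter_mem_nhdsWithin _ (Metric.ball_mem_nhds x one_pos), ?_⟩
  refine Measure.integrableOn_of_bounded (M := M) ?_ hf.aestronglyMeasurable ?_
  · exact ne_of_lt (lt_of_le_of_lt (measure_mono Set.inter_subset_right) measure_ball_lt_top)
  · exact (ae_restrict_iff' (measurableSet_Ioi.inter measurableSet_ball)).2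
      (Filter.Eventually.of_forall fun t ht => hb t ht.1)

/-- Let `h : ℝ → ℂ` be measurable, exponentially decaying for `t ≥ 1`, with
`h(t) = a + b log t + O(t^ε)` on `(0,1]`.  Then the zeta function
`ζ(z) = (1/Γ(z)) ∫_0^∞ t^(z-1) h(t) dt` satisfies `z ζ(z) → -b` as `z → 0` in the half-plane
`Re z > 0` (a simple pole at `0` with residue `-b`). -/
theorem zeta_simple_pole_from_log (h : ℝ → ℂ) (hm : Measurable h)
    (C c : ℝ) (hC : 0 < C) (hc : 0 < c)
    (hlarge : ∀ t : ℝ, 1 ≤ t → ‖h t‖ ≤ C * Real.exp (-c * t))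
    (a b : ℂ) (ε C' : ℝ) (hε : 0 < ε) (hC' : 0 < C')
    (hsmall : ∀ t ∈ Set.Ioc (0 : ℝ) 1,
      ‖h t - (a + b * (Real.log t : ℂ))‖ ≤ C' * t ^ ε) :
    Filter.Tendsto
      (fun z : ℂ => z *
        (1 / Complex.Gamma z * ∫ t in Set.Ioi (0 : ℝ), (t : ℂ) ^ (z - 1) * h t))
      (nhdsWithin 0 {z : ℂ | 0 < z.re}) (nhds (-b)) := by
  classical
  set f₁ : ℝ → ℂ := Set.indicator (Set.Ioc 0 1) (fun _ => (1:ℂ)) with hf₁def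
  set g : ℝ → ℂ := fun t => if t ≤ 1 then h t - (a + b * (Real.log t : ℂ)) else h t with hgdef
  have hg_meas : Measurable g := by
    apply Measurable.ite (measurableSet_le measurable_id measurable_const)
    · exact hm.sub (measurable_const.add (measurable_const.mul
        (Complex.measurable_ofReal.comp Real.measurable_log)))
    · exact hm
  have hf₁_meas : Measurable f₁ := measurable_const.indicator measurableSet_Ioc
  have hg_small : ∀ t ∈ Set.Ioc (0:ℝ) 1, ‖g t‖ ≤ C' * t ^ ε := by
    intro t ht
    simp only [hgdef, if_pos ht.2]
    exact hsmall t ht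
  have hg_large : ∀ t : ℝ, 1 < t → ‖g t‖ ≤ C * Real.exp (-c * t) := by
    intro t ht
    simp only [hgdef, if_neg (not_le.mpr ht)]
    exact hlarge t ht.le
  have hg_bdd : ∀ t ∈ Set.Ioi (0:ℝ), ‖g t‖ ≤ C' + C := by
    intro t ht
    rcases le_or_gt t 1 with h1 | h1
    · refine le_trans (hg_small t ⟨ht, h1⟩) ?_
      have h2 : t ^ ε ≤ 1 := Real.rpow_le_one (le_of_lt ht) h1 hε.le
      nlinarith
    · refine le_trans (hg_large t h1) ?_
      have h2 : Real.exp (-c * t) ≤ 1 := by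
        rw [Real.exp_le_one_iff]
        nlinarith
      nlinarith
  have hg_loc : LocallyIntegrableOn g (Set.Ioi 0) := locIntOn_of_bound g hg_meas _ hg_bdd
  have hf₁_loc : LocallyIntegrableOn f₁ (Set.Ioi 0) := by
    apply locIntOn_of_bound f₁ hf₁_meas 1
    intro t _
    by_cases hmem : t ∈ Set.Ioc (0:ℝ) 1 <;> simp [hf₁def, Set.indicator_apply, hmem]
  have hg_top : g =O[Filter.atTop] fun t => Real.exp (-c * t) := by
    refine Asymptotics.IsBigO.of_bound C ?_
    filter_upwards [Filter.eventually_gt_atTop (1:ℝ)] with t ht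
    simpa [Real.norm_eq_abs, Real.abs_exp] using hg_large t ht
  have hg_bot : g =O[nhdsWithin 0 (Set.Ioi 0)] fun t : ℝ => t ^ (-(-ε)) := by
    refine Asymptotics.IsBigO.of_bound C' ?_
    filter_upwards [Ioc_mem_nhdsGT (zero_lt_one (α := ℝ))] with t ht
    calc ‖g t‖ ≤ C' * t ^ ε := hg_small t ht
    _ = C' * ‖t ^ (-(-ε))‖ := by
        rw [neg_neg, Real.norm_eq_abs, abs_of_nonneg (Real.rpow_nonneg ht.1.le _)]
  have hf₁_top : ∀ a' : ℝ, f₁ =O[Filter.atTop] fun t : ℝ => t ^ (-a') := by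
    intro a'
    refine Asymptotics.IsBigO.of_bound 0 ?_
    filter_upwards [Filter.eventually_gt_atTop (1:ℝ)] with t ht
    rw [hf₁def, Set.indicator_of_notMem (fun hmem => absurd hmem.2 ht.not_ge)]
    simp
  have hf₁_bot : f₁ =O[nhdsWithin 0 (Set.Ioi 0)] fun t : ℝ => t ^ (-(0:ℝ)) := by
    refine Asymptotics.IsBigO.of_bound 1 ?_
    filter_upwards [self_mem_nhdsWithin] with t ht
    have h1 : ‖f₁ t‖ ≤ 1 := by
      by_cases hmem : t ∈ Set.Ioc (0:ℝ) 1 <;> simp [hf₁def, Set.indicator_apply, hmem]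
    rw [neg_zero, Real.rpow_zero]
    simpa using h1
  have hG_diff : DifferentiableAt ℂ (mellin g) 0 :=
    mellin_differentiableAt_of_isBigO_rpow_exp hc hg_loc hg_top hg_bot
      (by rw [Complex.zero_re]; linarith)
  -- the limit of the model function
  have key : Filter.Tendsto
      (fun z : ℂ => a * (Complex.Gamma z)⁻¹ - b * (Complex.Gamma (z+1))⁻¹
        + z * mellin g z * (Complex.Gamma z)⁻¹) (nhds 0) (nhds (-b)) := by
    have c1 : ContinuousAt (fun z : ℂ => (Complex.Gamma z)⁻¹) 0 :=
      Complex.differentiable_one_div_Gamma.continuous.continuousAt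
    have c2 : ContinuousAt (fun z : ℂ => (Complex.Gamma (z+1))⁻¹) 0 :=
      (Complex.differentiable_one_div_Gamma.continuous.comp
        (continuous_id.add continuous_const)).continuousAt
    have c3 : ContinuousAt (mellin g) 0 := hG_diff.continuousAt
    have hcont : ContinuousAt (fun z : ℂ => a * (Complex.Gamma z)⁻¹
        - b * (Complex.Gamma (z+1))⁻¹ + z * mellin g z * (Complex.Gamma z)⁻¹) 0 :=
      ((continuousAt_const.mul c1).sub (continuousAt_const.mul c2)).add
        ((continuousAt_id.mul c3).mul c1)
    have hval : a * (Complex.Gamma (0:ℂ))⁻¹ - b * (Complex.Gamma ((0:ℂ)+1))⁻¹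
        + (0:ℂ) * mellin g 0 * (Complex.Gamma (0:ℂ))⁻¹ = -b := by
      simp [Complex.Gamma_zero, Complex.Gamma_one]
    have h2 := hcont.tendsto
    rwa [hval] at h2
  refine Filter.Tendsto.congr' ?_ (key.mono_left nhdsWithin_le_nhds)
  filter_upwards [self_mem_nhdsWithin] with z hz
  have hz' : 0 < z.re := hz
  have hz0 : z ≠ 0 := by
    intro hzz
    rw [hzz, Complex.zero_re] at hz'
    exact lt_irrefl 0 hz'
  have hΓ : Complex.Gamma z ≠ 0 := by
    refine Complex.Gamma_ne_zero fun m hzm => ?_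
    rw [hzm, Complex.neg_re, Complex.natCast_re] at hz'
    have : (0:ℝ) ≤ (m:ℝ) := Nat.cast_nonneg m
    linarith
  have hM1 : HasMellin f₁ z (1/z) := hasMellin_one_Ioc hz'
  have hd := mellin_hasDerivAt_of_isBigO_rpow hf₁_loc (hf₁_top (z.re+1)) (lt_add_one _)
      hf₁_bot hz'
  have hM2val : mellin (fun t => Real.log t • f₁ t) z = -(z^2)⁻¹ := by
    have heq : mellin f₁ =ᶠ[nhds z] fun w => w⁻¹ := by
      have hopen : IsOpen {w : ℂ | 0 < w.re} := isOpen_lt continuous_const Complex.continuous_re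
      filter_upwards [hopen.mem_nhds hz'] with w hw
      simpa [one_div] using (hasMellin_one_Ioc hw).2
    have h1 : HasDerivAt (fun w : ℂ => w⁻¹) (mellin (fun t => Real.log t • f₁ t) z) z :=
      hd.2.congr_of_eventuallyEq heq.symm
    exact h1.unique (hasDerivAt_inv hz0)
  have hMg : MellinConvergent g z :=
    mellinConvergent_of_isBigO_rpow_exp hc hg_loc hg_top hg_bot (by linarith)
  have hconv1 : MellinConvergent (fun t => a • f₁ t) z := hM1.1.const_smul a
  have hconv2 : MellinConvergent (fun t => b • (Real.log t • f₁ t)) z := hd.1.const_smul b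
  have hinner := hasMellin_add hconv2 hMg
  have houter := hasMellin_add hconv1 hinner.1
  have hint : (∫ t in Set.Ioi (0:ℝ), (t:ℂ) ^ (z-1) * h t)
      = mellin (fun t => a • f₁ t + (b • (Real.log t • f₁ t) + g t)) z := by
    rw [mellin]
    refine setIntegral_congr_fun measurableSet_Ioi fun t ht => ?_
    have ht' : (0:ℝ) < t := ht
    rw [smul_eq_mul]
    congr 1
    rcases le_or_gt t 1 with h1 | h1
    · have hmem : t ∈ Set.Ioc (0:ℝ) 1 := ⟨ht', h1⟩
      have hf1t : f₁ t = 1 := Set.indicator_of_mem hmem _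
      have hgt : g t = h t - (a + b * (Real.log t : ℂ)) := if_pos h1
      rw [hf1t, hgt]
      simp only [smul_eq_mul, Complex.real_smul, mul_one]
      ring
    · have hnot : t ∉ Set.Ioc (0:ℝ) 1 := fun hmem => absurd hmem.2 h1.not_ge
      have hf1t : f₁ t = 0 := Set.indicator_of_notMem hnot _
      have hgt : g t = h t := if_neg h1.not_ge
      rw [hf1t, hgt]
      simp
  have hval2 : mellin (fun t => a • f₁ t + (b • (Real.log t • f₁ t) + g t)) z
      = a * z⁻¹ + (b * -(z^2)⁻¹ + mellin g z) := by
    rw [houter.2, hinner.2, mellin_const_smul, mellin_const_smul, hM1.2, hM2val]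
    simp [one_div, smul_eq_mul]
  rw [hint, hval2, Complex.Gamma_add_one z hz0]
  field_simp
  ring
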